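/- Assume D > 1. Then φ^{D+2}(c_D) = (F⁻¹ γ c₂ u₂ ⋯ c_D u_D) · (F⁻¹ η F) · (u_D⁻¹ c_D⁻¹ ⋯ u₂⁻¹ c₂⁻¹ γ⁻¹ F), where γ = u₀ c₁ u₁ and η = u₀⁻¹ F u_{D+1}⁻¹ F⁻¹ u₀. -/
import Mathlib


abbrev G : Type := FreeGroup (ℤ ⊕ ℤ)

/-- generator cₙ -/
def c (n : ℤ) : G := FreeGroup.of (Sum.inl n)
/-- generator uₙ -/
def u (n : ℤ) : G := FreeGroup.of (Sum.inr n)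

/-- F = c₁ c₂ ⋯ c_D -/
def F (D : ℕ) : G := ((List.range D).map (fun i => c ((i : ℤ) + 1))).prod

/-- the tangle endomorphism for minimum delay time D -/
def φ (D : ℕ) : G →* G := FreeGroup.lift fun x =>
  match x with
  | Sum.inl n => if n = (D : ℤ) then (F D)⁻¹ * (u 0)⁻¹ * F D else c (n + 1)
  | Sum.inr n => u (n + 1)

/- ------------------ auxiliary lemmas ------------------ -/

lemma phi_u (D : ℕ) (n : ℤ) : φ D (u n) = u (n + 1) := by simp [φ, u]

lemma phi_c (D : ℕ) {n : ℤ} (h : n ≠ (D : ℤ)) : φ D (c n) = c (n + 1) := by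
  simp [φ, c, h]

lemma phi_cD (D : ℕ) : φ D (c (D : ℤ)) = (F D)⁻¹ * (u 0)⁻¹ * F D := by
  simp [φ, c]

lemma phi_iter_u (D k : ℕ) (n : ℤ) : (⇑(φ D))^[k] (u n) = u (n + k) := by
  induction k generalizing n with
  | zero => simp
  | succ k ih =>
    rw [Function.iterate_succ_apply, phi_u, ih]
    congr 1
    push_cast
    ring

lemma coe_list_eq (l : List ℕ) :
    (do let a ← l; pure ((a : ℤ))) = l.map (Nat.cast : ℕ → ℤ) := by
  induction l with
  | nil => rfl
  | cons x xs ih => simpa using ih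

lemma F_eq (D : ℕ) : F D = ((List.range D).map (fun i : ℕ => c ((i : ℤ) + 1))).prod := by
  rw [F, coe_list_eq (List.range D), List.map_map]
  rfl

/-- the word S k = c₁u₁ c₂u₂ ⋯ c_k u_k -/
def S (k : ℕ) : G :=
  ((List.range k).map (fun i : ℕ => c ((i : ℤ) + 1) * u ((i : ℤ) + 1))).prod

lemma S_succ' (k : ℕ) :
    S (k + 1) =
      c 1 * u 1 *
        ((List.range k).map (fun i : ℕ => c ((i : ℤ) + 2) * u ((i : ℤ) + 2))).prod := by
  rw [S, List.range_succ_eq_map, List.map_cons, List.prod_cons, List.map_map]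
  have h : ((List.range k).map
        ((fun i : ℕ => c ((i : ℤ) + 1) * u ((i : ℤ) + 1)) ∘ Nat.succ))
      = (List.range k).map (fun i : ℕ => c ((i : ℤ) + 2) * u ((i : ℤ) + 2)) := by
    apply List.map_congr_left; intro i _
    simp only [Function.comp]
    push_cast
    ring_nf
  rw [h]
  norm_num [mul_assoc]

lemma phi_S (D k : ℕ) (h : k < D) : φ D (S k) = (c 1 * u 1)⁻¹ * S (k + 1) := by
  rw [S, map_list_prod, List.map_map, S_succ', ← mul_assoc, inv_mul_cancel, one_mul]
  apply congrArg
  apply List.map_congr_left; intro i hi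
  have hik : i < k := List.mem_range.mp hi
  have hne : ((i : ℤ) + 1) ≠ ((D : ℕ) : ℤ) := by omega
  simp only [Function.comp, map_mul]
  rw [phi_c D hne, phi_u]
  push_cast
  ring_nf

lemma F_head (m : ℕ) :
    F (m + 1) = c 1 * ((List.range m).map (fun i : ℕ => c ((i : ℤ) + 2))).prod := by
  rw [F_eq, List.range_succ_eq_map, List.map_cons, List.prod_cons, List.map_map]
  have h : ((List.range m).map ((fun i : ℕ => c ((i : ℤ) + 1)) ∘ Nat.succ))
      = (List.range m).map (fun i : ℕ => c ((i : ℤ) + 2)) := by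
    apply List.map_congr_left; intro i _
    simp only [Function.comp]
    push_cast
    ring_nf
  rw [h]
  norm_num

lemma F_last (m : ℕ) :
    F (m + 1) = ((List.range m).map (fun i : ℕ => c ((i : ℤ) + 1))).prod * c ((m : ℤ) + 1) := by
  rw [F_eq, List.range_succ, List.map_append, List.prod_append]
  simp

lemma phi_F (m : ℕ) : φ (m + 1) (F (m + 1)) = (c 1)⁻¹ * (u 0)⁻¹ * F (m + 1) := by
  conv_lhs => rw [F_last]
  rw [map_mul, map_list_prod, List.map_map]
  have h1 : ((List.range m).map (⇑(φ (m + 1)) ∘ fun i : ℕ => c ((i : ℤ) + 1)))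
      = (List.range m).map (fun i : ℕ => c ((i : ℤ) + 2)) := by
    apply List.map_congr_left; intro i hi
    have hik : i < m := List.mem_range.mp hi
    have hne : ((i : ℤ) + 1) ≠ (((m + 1 : ℕ)) : ℤ) := by omega
    simp only [Function.comp]
    rw [phi_c (m + 1) hne]
    push_cast
    ring_nf
  have h2 : φ (m + 1) (c ((m : ℤ) + 1)) = (F (m + 1))⁻¹ * (u 0)⁻¹ * F (m + 1) := by
    have h := phi_cD (m + 1)
    push_cast at h
    exact h
  rw [h1, h2]
  have h3 : ((List.range m).map (fun i : ℕ => c ((i : ℤ) + 2))).prod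
      = (c 1)⁻¹ * F (m + 1) := by
    rw [F_head]; group
  rw [h3]
  group

lemma HF (m : ℕ) : ∀ k : ℕ, k + 1 ≤ m + 1 →
    (⇑(φ (m + 1)))^[k + 1] (F (m + 1)) =
      (c ((k : ℤ) + 1))⁻¹ * (S k)⁻¹ * (u 0)⁻¹ * F (m + 1) := by
  intro k
  induction k with
  | zero =>
    intro _
    simpa [S] using phi_F m
  | succ k ih =>
    intro hk
    have hne : ((k : ℤ) + 1) ≠ (((m + 1 : ℕ)) : ℤ) := by push_cast; omega
    rw [Function.iterate_succ_apply', ih (by omega)]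
    rw [map_mul, map_mul, map_mul, map_inv, map_inv, map_inv,
      phi_c (m + 1) hne, phi_u, phi_S (m + 1) k (by omega), phi_F]
    have hcast : c ((k : ℤ) + 1 + 1) = c (((k + 1 : ℕ) : ℤ) + 1) := by push_cast; ring_nf
    rw [hcast]
    group

lemma FD1 (m : ℕ) :
    (⇑(φ (m + 1)))^[m + 2] (F (m + 1)) =
      (F (m + 1))⁻¹ * u 0 * F (m + 1) * (S (m + 1))⁻¹ * (u 0)⁻¹ * F (m + 1) := by
  have h := HF m m (le_refl _)
  rw [show m + 2 = (m + 1) + 1 from rfl, Function.iterate_succ_apply', h]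
  have hcD : φ (m + 1) (c ((m : ℤ) + 1)) = (F (m + 1))⁻¹ * (u 0)⁻¹ * F (m + 1) := by
    have h := phi_cD (m + 1); push_cast at h; exact h
  rw [map_mul, map_mul, map_mul, map_inv, map_inv, map_inv,
    hcD, phi_u, phi_S (m + 1) m (by omega), phi_F]
  group

theorem stmt_6 (D : ℕ) (hD : 1 < D) :
    let γ : G := u 0 * c 1 * u 1
    let η : G := (u 0)⁻¹ * F D * (u ((D : ℤ) + 1))⁻¹ * (F D)⁻¹ * u 0
    let Q : G := ((List.range (D - 1)).map (fun i => c ((i : ℤ) + 2) * u ((i : ℤ) + 2))).prod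
    (⇑(φ D))^[D + 2] (c D) =
      ((F D)⁻¹ * γ * Q) * ((F D)⁻¹ * η * F D) * (Q⁻¹ * γ⁻¹ * F D) := by
  intro γ η Q
  obtain ⟨m, rfl⟩ : ∃ m, D = m + 1 := ⟨D - 1, by omega⟩
  have hQ : Q = ((List.range m).map (fun i : ℕ => c ((i : ℤ) + 2) * u ((i : ℤ) + 2))).prod := by
    have h0 : Q = (List.map (fun i : ℤ => c (i + 2) * u (i + 2))
        (do let a ← List.range m; pure ((a : ℤ)))).prod := rfl
    rw [h0, coe_list_eq (List.range m), List.map_map]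
    rfl
  have hS : S (m + 1) = c 1 * u 1 * Q := by rw [S_succ', hQ]
  have hiter : (⇑(φ (m + 1)))^[m + 1 + 2] (c ((m + 1 : ℕ) : ℤ)) =
      ((⇑(φ (m + 1)))^[m + 2] (F (m + 1)))⁻¹ * (u (((m + 1 : ℕ) : ℤ) + 1))⁻¹ *
        ((⇑(φ (m + 1)))^[m + 2] (F (m + 1))) := by
    rw [show m + 1 + 2 = (m + 2) + 1 from by ring, Function.iterate_succ_apply, phi_cD]
    rw [iterate_map_mul, iterate_map_mul, iterate_map_inv, iterate_map_inv, phi_iter_u]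
    congr 2
    push_cast
    ring
  rw [hiter, FD1, hS]
  show _ = ((F (m + 1))⁻¹ * (u 0 * c 1 * u 1) * Q) *
      ((F (m + 1))⁻¹ * ((u 0)⁻¹ * F (m + 1) * (u (((m + 1 : ℕ) : ℤ) + 1))⁻¹ * (F (m + 1))⁻¹ * u 0) * F (m + 1)) *
      (Q⁻¹ * (u 0 * c 1 * u 1)⁻¹ * F (m + 1))
  group
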